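/- Let A be an integral domain and P a prime ideal of A. Then P is the radical of a principal ideal if and only if for every family Q of prime ideals of A, if P is contained in the union of the primes in Q, then P is contained in some member of Q. -/
import Mathlib


theorem stmt4 {A : Type*} [CommRing A] [IsDomain A] (P : Ideal A) (hP : P.IsPrime) :
    (∃ c : A, P = (Ideal.span {c}).radical) ↔
      ∀ 𝒬 : Set (Ideal A), (∀ Q ∈ 𝒬, Q.IsPrime) →
        (P : Set A) ⊆ (⋃ Q ∈ 𝒬, (Q : Set A)) → ∃ Q ∈ 𝒬, P ≤ Q := by
  constructor
  · rintro ⟨c, rfl⟩ 𝒬 hprime hcov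
    have hc : c ∈ (Ideal.span {c}).radical :=
      Ideal.le_radical (Ideal.subset_span rfl)
    obtain ⟨Q, hQ, hcQ⟩ := by
      simpa using hcov hc
    refine ⟨Q, hQ, ?_⟩
    have : Ideal.span {c} ≤ Q := by
      rw [Ideal.span_le, Set.singleton_subset_iff]; exact hcQ
    calc (Ideal.span {c}).radical ≤ Q.radical := Ideal.radical_mono this
      _ = Q := (hprime Q hQ).radical
  · intro h
    set 𝒬 : Set (Ideal A) := {Q | Q.IsPrime ∧ ¬ P ≤ Q} with h𝒬
    have hnot : ¬ (P : Set A) ⊆ (⋃ Q ∈ 𝒬, (Q : Set A)) := by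
      intro hsub
      obtain ⟨Q, hQ, hPQ⟩ := h 𝒬 (fun Q hQ => hQ.1) hsub
      exact hQ.2 hPQ
    obtain ⟨c, hcP, hcU⟩ := Set.not_subset.mp hnot
    refine ⟨c, le_antisymm ?_ ?_⟩
    · rw [Ideal.radical_eq_sInf]
      refine le_sInf fun J ⟨hJle, hJp⟩ => ?_
      by_contra hPJ
      exact hcU (Set.mem_biUnion (show J ∈ 𝒬 from ⟨hJp, hPJ⟩)
        (hJle (Ideal.subset_span rfl)))
    · calc (Ideal.span {c}).radical ≤ P.radical :=
            Ideal.radical_mono (by rw [Ideal.span_le, Set.singleton_subset_iff]; exact hcP)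
        _ = P := hP.radical
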